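/- The stabilizer 2-Rényi entropy is additive under tensor products: for unit vectors v ∈ ℂ^(2^m) and w ∈ ℂ^(2^n), one has M₂((v ⊗ w)(v ⊗ w)ᴴ) = M₂(v vᴴ) + M₂(w wᴴ), where v ⊗ w denotes the Kronecker product vector on m + n qubits. -/

import Mathlib

noncomputable section
open Matrix Kronecker

/-- The four single-qubit Pauli matrices I, X, Y, Z. -/
def pauli : Fin 4 → Matrix (Fin 2) (Fin 2) ℂ :=
  ![1, !![0, 1; 1, 0], !![0, -Complex.I; Complex.I, 0], !![1, 0; 0, -1]]

/-- An `n`-qubit Pauli string σ₁ ⊗ ⋯ ⊗ σₙ (Kronecker product, written entrywise). -/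
def pauliString (n : ℕ) (f : Fin n → Fin 4) :
    Matrix (Fin n → Fin 2) (Fin n → Fin 2) ℂ :=
  Matrix.of fun v w => ∏ i : Fin n, pauli (f i) (v i) (w i)

/-- Rank-one density matrix v vᴴ. -/
def dm {ι : Type*} (v : ι → ℂ) : Matrix ι ι ℂ := Matrix.vecMulVec v (star v)

/-- Stabilizer 2-Rényi entropy of an `n`-qubit state. -/
def M2 (n : ℕ) (ψ : Matrix (Fin n → Fin 2) (Fin n → Fin 2) ℂ) : ℝ :=
  - Real.logb 2 ((1 / 2 ^ n) *
      ∑ f : Fin n → Fin 4, ‖(pauliString n f * ψ).trace‖ ^ 4)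

/-- Stabilizer 2-Rényi entropy of an `(m+n)`-qubit state, with the Hilbert space of
`m + n` qubits realized as the tensor product of the `m`- and `n`-qubit spaces;
the Pauli strings on `m + n` qubits are the Kronecker products of the Pauli strings
of the two factors. -/
def M2prod (m n : ℕ)
    (ψ : Matrix ((Fin m → Fin 2) × (Fin n → Fin 2)) ((Fin m → Fin 2) × (Fin n → Fin 2)) ℂ) :
    ℝ :=
  - Real.logb 2 ((1 / 2 ^ (m + n)) *
      ∑ fg : (Fin m → Fin 4) × (Fin n → Fin 4),
        ‖((pauliString m fg.1 ⊗ₖ pauliString n fg.2) * ψ).trace‖ ^ 4)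

/-- Tensor (Kronecker) product of vectors. -/
def tens {α β : Type*} (v : α → ℂ) (w : β → ℂ) : α × β → ℂ := fun p => v p.1 * w p.2

lemma key (m n : ℕ) (f : Fin m → Fin 4) (g : Fin n → Fin 4)
    (v : (Fin m → Fin 2) → ℂ) (w : (Fin n → Fin 2) → ℂ) :
    ((pauliString m f ⊗ₖ pauliString n g) * dm (tens v w)).trace
      = (pauliString m f * dm v).trace * (pauliString n g * dm w).trace := by
  simp only [Matrix.trace, Matrix.diag_apply, Matrix.mul_apply, dm, vecMulVec_apply,
    kroneckerMap_apply, tens, Pi.star_apply, Fintype.sum_prod_type]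
  rw [Finset.sum_mul_sum]
  apply Finset.sum_congr rfl; intro i1 _
  rw [← Finset.mul_sum, Finset.sum_mul, Finset.sum_comm]
  apply Finset.sum_congr rfl; intro y _
  rw [Finset.mul_sum]
  apply Finset.sum_congr rfl; intro i2 _
  rw [Finset.mul_sum]
  apply Finset.sum_congr rfl; intro j2 _
  rw [star_mul']; ring

lemma pauliString_zero (k : ℕ) : pauliString k (fun _ => 0) = 1 := by
  ext a b
  simp only [pauliString, pauli, Matrix.of_apply, Matrix.cons_val_zero, Matrix.one_apply,
    Finset.prod_boole]
  simp [funext_iff]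

lemma trace_dm {ι : Type*} [Fintype ι] (v : ι → ℂ)
    (hv : ∑ i, Complex.normSq (v i) = 1) : (dm v).trace = 1 := by
  have : (dm v).trace = ∑ i, (Complex.normSq (v i) : ℂ) := by
    simp [dm, Matrix.trace, Matrix.vecMulVec_apply, Complex.mul_conj, Complex.star_def]
  rw [this, ← Complex.ofReal_sum, hv, Complex.ofReal_one]

lemma one_le_sum (k : ℕ) (v : (Fin k → Fin 2) → ℂ)
    (hv : ∑ i, Complex.normSq (v i) = 1) :
    (1:ℝ) ≤ ∑ f : Fin k → Fin 4, ‖(pauliString k f * dm v).trace‖ ^ 4 := by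
  have h := Finset.single_le_sum
    (f := fun f : Fin k → Fin 4 => ‖(pauliString k f * dm v).trace‖ ^ 4)
    (fun f _ => by positivity) (Finset.mem_univ (fun _ => 0))
  calc (1:ℝ) = ‖(pauliString k (fun _ => 0) * dm v).trace‖ ^ 4 := by
        rw [pauliString_zero, one_mul, trace_dm v hv, norm_one, one_pow]
    _ ≤ _ := h

theorem stabilizer_entropy_additive
    (m n : ℕ) (v : (Fin m → Fin 2) → ℂ) (w : (Fin n → Fin 2) → ℂ)
    (hv : ∑ i, Complex.normSq (v i) = 1)
    (hw : ∑ i, Complex.normSq (w i) = 1) :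
    M2prod m n (dm (tens v w)) = M2 m (dm v) + M2 n (dm w) := by
  set A := ∑ f : Fin m → Fin 4, ‖(pauliString m f * dm v).trace‖ ^ 4 with hA
  set B := ∑ g : Fin n → Fin 4, ‖(pauliString n g * dm w).trace‖ ^ 4 with hB
  have hA1 := one_le_sum m v hv
  have hB1 := one_le_sum n w hw
  have hfac : (∑ fg : (Fin m → Fin 4) × (Fin n → Fin 4),
      ‖((pauliString m fg.1 ⊗ₖ pauliString n fg.2) * dm (tens v w)).trace‖ ^ 4)
      = A * B := by
    rw [hA, hB, Finset.sum_mul_sum, Fintype.sum_prod_type]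
    exact Finset.sum_congr rfl fun f _ => Finset.sum_congr rfl fun g _ => by
      rw [key, norm_mul, mul_pow]
  have hx : (0:ℝ) < (1 / 2 ^ m) * A := by positivity
  have hy : (0:ℝ) < (1 / 2 ^ n) * B := by positivity
  unfold M2prod M2
  rw [hfac, show (1 / 2 ^ (m+n) : ℝ) * (A * B) = ((1/2^m)*A) * ((1/2^n)*B) by
    rw [pow_add]; ring]
  rw [Real.logb_mul hx.ne' hy.ne', neg_add]
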